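/- Let n ≥ 1 and let u_0,…,u_n : ℂ∖{0} → ℝ be twice continuously differentiable with u_j + u_{n−j} = 0 for all j. Define, for z ∈ ℂ∖{0}, the (n+1)×(n+1) matrices: Φ(z) with entries e^{(u_j − u_{j−1})/2}/z in positions (j,j−1) for 1 ≤ j ≤ n, entry e^{(u_0 − u_n)/2} in position (0,n), zeros elsewhere; A'(z) = ½ diag((u_0)_z,…,(u_n)_z) and A''(z) = −½ diag((u_0)_{z̄},…,(u_n)_{z̄}); and c(X) the matrix with entries c(X)_{ij} = conj(X_{n−i,n−j}). Then the Hitchin equations ∂_z A'' − ∂_{z̄} A' + [A', A''] + [Φ, c(Φ)] = 0 and ∂_{z̄} Φ + [A'', Φ] = 0 hold on ℂ∖{0} if and only if the u_j solve the tt*-Toda system: (u_0)_{zz̄} = e^{u_0−u_n} − |z|^{−2} e^{u_1−u_0}; (u_j)_{zz̄} = |z|^{−2} e^{u_j−u_{j−1}} − |z|^{−2} e^{u_{j+1}−u_j} for 1 ≤ j ≤ n−1; (u_n)_{zz̄} = |z|^{−2} e^{u_n−u_{n−1}} − e^{u_0−u_n}. -/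

import Mathlib

/-- The Wirtinger derivative `f_z = ½(∂f/∂x − i ∂f/∂y)`. -/
noncomputable def wirtingerDz (f : ℂ → ℂ) (z : ℂ) : ℂ :=
  (fderiv ℝ f z 1 - Complex.I * fderiv ℝ f z Complex.I) / 2

/-- The Wirtinger derivative `f_z̄ = ½(∂f/∂x + i ∂f/∂y)`. -/
noncomputable def wirtingerDzbar (f : ℂ → ℂ) (z : ℂ) : ℂ :=
  (fderiv ℝ f z 1 + Complex.I * fderiv ℝ f z Complex.I) / 2

/-- `u_{zz̄}` for a real-valued function `u`. -/
noncomputable def uzzbar (u : ℂ → ℝ) (z : ℂ) : ℂ :=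
  wirtingerDzbar (fun w => wirtingerDz (fun x => ((u x : ℝ) : ℂ)) w) z

/-- The Higgs field `Φ(z)`: entries `e^{(u_j−u_{j−1})/2}/z` in positions `(j,j−1)`
for `1 ≤ j ≤ n`, entry `e^{(u_0−u_n)/2}` in position `(0,n)`, zeros elsewhere. -/
noncomputable def higgsMat (n : ℕ) (u : Fin (n + 1) → ℂ → ℝ) (z : ℂ) :
    Matrix (Fin (n + 1)) (Fin (n + 1)) ℂ :=
  Matrix.of fun i j =>
    if (i : ℕ) = 0 ∧ (j : ℕ) = n then (Real.exp ((u 0 z - u (Fin.last n) z) / 2) : ℂ)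
    else if (i : ℕ) = (j : ℕ) + 1 then (Real.exp ((u i z - u j z) / 2) : ℂ) / z
    else 0

/-- `A'(z) = ½ diag((u_0)_z,…,(u_n)_z)`. -/
noncomputable def AprimeMat (n : ℕ) (u : Fin (n + 1) → ℂ → ℝ) (z : ℂ) :
    Matrix (Fin (n + 1)) (Fin (n + 1)) ℂ :=
  (1 / 2 : ℂ) • Matrix.diagonal (fun j => wirtingerDz (fun w => ((u j w : ℝ) : ℂ)) z)

/-- `A''(z) = −½ diag((u_0)_{z̄},…,(u_n)_{z̄})`. -/
noncomputable def AdoubleMat (n : ℕ) (u : Fin (n + 1) → ℂ → ℝ) (z : ℂ) :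
    Matrix (Fin (n + 1)) (Fin (n + 1)) ℂ :=
  (-(1 / 2) : ℂ) • Matrix.diagonal (fun j => wirtingerDzbar (fun w => ((u j w : ℝ) : ℂ)) z)

/-- The conjugation `c(X)_{ij} = conj(X_{n−i,n−j})`. -/
def cConj (n : ℕ) (X : Matrix (Fin (n + 1)) (Fin (n + 1)) ℂ) :
    Matrix (Fin (n + 1)) (Fin (n + 1)) ℂ :=
  Matrix.of fun i j => starRingEnd ℂ (X (Fin.rev i) (Fin.rev j))

section toolkit
variable (f g : ℂ → ℂ) (z c : ℂ)

lemma wz_const : wirtingerDz (fun _ => c) z = 0 := by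
  simp [wirtingerDz]

lemma wzbar_const : wirtingerDzbar (fun _ => c) z = 0 := by
  simp [wirtingerDzbar]

variable {f g z}

lemma wz_add (hf : DifferentiableAt ℝ f z) (hg : DifferentiableAt ℝ g z) :
    wirtingerDz (fun w => f w + g w) z = wirtingerDz f z + wirtingerDz g z := by
  simp only [wirtingerDz, fderiv_fun_add hf hg, ContinuousLinearMap.add_apply]; ring

lemma wzbar_add (hf : DifferentiableAt ℝ f z) (hg : DifferentiableAt ℝ g z) :
    wirtingerDzbar (fun w => f w + g w) z = wirtingerDzbar f z + wirtingerDzbar g z := by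
  simp only [wirtingerDzbar, fderiv_fun_add hf hg, ContinuousLinearMap.add_apply]; ring

lemma wz_sub (hf : DifferentiableAt ℝ f z) (hg : DifferentiableAt ℝ g z) :
    wirtingerDz (fun w => f w - g w) z = wirtingerDz f z - wirtingerDz g z := by
  simp only [wirtingerDz, fderiv_fun_sub hf hg, ContinuousLinearMap.sub_apply]; ring

lemma wzbar_sub (hf : DifferentiableAt ℝ f z) (hg : DifferentiableAt ℝ g z) :
    wirtingerDzbar (fun w => f w - g w) z = wirtingerDzbar f z - wirtingerDzbar g z := by
  simp only [wirtingerDzbar, fderiv_fun_sub hf hg, ContinuousLinearMap.sub_apply]; ring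

lemma wz_const_mul (hf : DifferentiableAt ℝ f z) (c : ℂ) :
    wirtingerDz (fun w => c * f w) z = c * wirtingerDz f z := by
  simp only [wirtingerDz, fderiv_const_mul hf c, ContinuousLinearMap.smul_apply, smul_eq_mul]; ring

lemma wzbar_const_mul (hf : DifferentiableAt ℝ f z) (c : ℂ) :
    wirtingerDzbar (fun w => c * f w) z = c * wirtingerDzbar f z := by
  simp only [wirtingerDzbar, fderiv_const_mul hf c, ContinuousLinearMap.smul_apply, smul_eq_mul]; ring

lemma wz_div_const (hf : DifferentiableAt ℝ f z) (c : ℂ) :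
    wirtingerDz (fun w => f w / c) z = wirtingerDz f z / c := by
  have : (fun w => f w / c) = fun w => c⁻¹ * f w := by funext w; ring
  rw [this, wz_const_mul hf]; ring

lemma wzbar_div_const (hf : DifferentiableAt ℝ f z) (c : ℂ) :
    wirtingerDzbar (fun w => f w / c) z = wirtingerDzbar f z / c := by
  have : (fun w => f w / c) = fun w => c⁻¹ * f w := by funext w; ring
  rw [this, wzbar_const_mul hf]; ring

lemma wz_mul (hf : DifferentiableAt ℝ f z) (hg : DifferentiableAt ℝ g z) :
    wirtingerDz (fun w => f w * g w) z = wirtingerDz f z * g z + f z * wirtingerDz g z := by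
  simp only [wirtingerDz, fderiv_fun_mul hf hg, ContinuousLinearMap.add_apply,
    ContinuousLinearMap.smul_apply, smul_eq_mul]; ring

lemma wzbar_mul (hf : DifferentiableAt ℝ f z) (hg : DifferentiableAt ℝ g z) :
    wirtingerDzbar (fun w => f w * g w) z = wirtingerDzbar f z * g z + f z * wirtingerDzbar g z := by
  simp only [wirtingerDzbar, fderiv_fun_mul hf hg, ContinuousLinearMap.add_apply,
    ContinuousLinearMap.smul_apply, smul_eq_mul]; ring

lemma wzbar_holo (hf : DifferentiableAt ℂ f z) : wirtingerDzbar f z = 0 := by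
  have h := (hf.hasFDerivAt.restrictScalars ℝ).fderiv
  have hI : fderiv ℂ f z Complex.I = Complex.I * fderiv ℂ f z 1 := by
    have := (fderiv ℂ f z).map_smul Complex.I (1 : ℂ)
    simpa [smul_eq_mul] using this
  rw [wirtingerDzbar, h]
  simp only [ContinuousLinearMap.coe_restrictScalars']
  rw [hI]
  have : Complex.I * (Complex.I * fderiv ℂ f z 1) = - fderiv ℂ f z 1 := by
    rw [← mul_assoc, Complex.I_mul_I]; ring
  rw [this]; ring

lemma wz_cexp (hg : DifferentiableAt ℝ g z) :
    wirtingerDz (fun w => Complex.exp (g w)) z = Complex.exp (g z) * wirtingerDz g z := by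
  have h := (hg.hasFDerivAt.cexp).fderiv
  simp only [wirtingerDz, h, ContinuousLinearMap.smul_apply, smul_eq_mul]; ring

lemma wzbar_cexp (hg : DifferentiableAt ℝ g z) :
    wirtingerDzbar (fun w => Complex.exp (g w)) z = Complex.exp (g z) * wirtingerDzbar g z := by
  have h := (hg.hasFDerivAt.cexp).fderiv
  simp only [wirtingerDzbar, h, ContinuousLinearMap.smul_apply, smul_eq_mul]; ring

lemma diffAt_fderiv_apply (hf : ContDiffAt ℝ 2 f z) (v : ℂ) :
    DifferentiableAt ℝ (fun w => fderiv ℝ f w v) z := by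
  have h1 : DifferentiableAt ℝ (fderiv ℝ f) z :=
    (hf.fderiv_right (m := 1) (by norm_num)).differentiableAt one_ne_zero
  exact h1.clm_apply (differentiableAt_const v)

lemma diffAt_wz (hf : ContDiffAt ℝ 2 f z) :
    DifferentiableAt ℝ (fun w => wirtingerDz f w) z := by
  simp only [wirtingerDz]
  have h : DifferentiableAt ℝ
      (fun w => fderiv ℝ f w 1 - Complex.I * fderiv ℝ f w Complex.I) z :=
    (diffAt_fderiv_apply hf 1).sub ((diffAt_fderiv_apply hf Complex.I).const_mul Complex.I)
  simp only [div_eq_mul_inv]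
  exact h.mul_const _

lemma diffAt_wzbar (hf : ContDiffAt ℝ 2 f z) :
    DifferentiableAt ℝ (fun w => wirtingerDzbar f w) z := by
  simp only [wirtingerDzbar]
  have h : DifferentiableAt ℝ
      (fun w => fderiv ℝ f w 1 + Complex.I * fderiv ℝ f w Complex.I) z :=
    (diffAt_fderiv_apply hf 1).add ((diffAt_fderiv_apply hf Complex.I).const_mul Complex.I)
  simp only [div_eq_mul_inv]
  exact h.mul_const _

lemma snd_fderiv_apply (hf : ContDiffAt ℝ 2 f z) (v : ℂ) :
    fderiv ℝ (fun w => fderiv ℝ f w v) z = (fderiv ℝ (fderiv ℝ f) z).flip v := by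
  have h1 : DifferentiableAt ℝ (fderiv ℝ f) z :=
    (hf.fderiv_right (m := 1) (by norm_num)).differentiableAt one_ne_zero
  rw [show (fun w => fderiv ℝ f w v) = (fun w => (fderiv ℝ f w) ((fun _ => v) w)) from rfl,
    fderiv_clm_apply h1 (differentiableAt_const v)]
  ext w
  simp

lemma wirtinger_symm (hf : ContDiffAt ℝ 2 f z) :
    wirtingerDz (fun w => wirtingerDzbar f w) z = wirtingerDzbar (fun w => wirtingerDz f w) z := by
  have hd1 := diffAt_fderiv_apply hf 1
  have hdI := diffAt_fderiv_apply hf Complex.I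
  have hsymm := (hf.isSymmSndFDerivAt (by norm_num)) 1 Complex.I
  have e1 : (fun w => wirtingerDzbar f w)
      = fun w => (fderiv ℝ f w 1 + Complex.I * fderiv ℝ f w Complex.I) / 2 := rfl
  have e2 : (fun w => wirtingerDz f w)
      = fun w => (fderiv ℝ f w 1 - Complex.I * fderiv ℝ f w Complex.I) / 2 := rfl
  rw [e1, e2, wz_div_const (hd1.fun_add (hdI.const_mul _)) 2,
    wzbar_div_const (hd1.fun_sub (hdI.const_mul _)) 2,
    wz_add hd1 (hdI.const_mul _), wzbar_sub hd1 (hdI.const_mul _),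
    wz_const_mul hdI, wzbar_const_mul hdI]
  simp only [wirtingerDz, wirtingerDzbar, snd_fderiv_apply hf]
  simp only [ContinuousLinearMap.flip_apply]
  rw [hsymm]
  ring
end toolkit

section matrices
variable {n : ℕ} (u : Fin (n + 1) → ℂ → ℝ) (z : ℂ)

lemma cconj_higgs (hn : 1 ≤ n) (hanti : ∀ j, u j z + u (Fin.rev j) z = 0) (i j : Fin (n + 1)) :
    cConj n (higgsMat n u z) i j =
      if (i : ℕ) = n ∧ (j : ℕ) = 0 then (Real.exp ((u 0 z - u (Fin.last n) z) / 2) : ℂ)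
      else if (j : ℕ) = (i : ℕ) + 1 then (Real.exp ((u j z - u i z) / 2) : ℂ) / (starRingEnd ℂ) z
      else 0 := by
  have hri : (Fin.rev i : ℕ) = n - (i : ℕ) := by rw [Fin.val_rev]; omega
  have hrj : (Fin.rev j : ℕ) = n - (j : ℕ) := by rw [Fin.val_rev]; omega
  have hi := i.isLt
  have hj := j.isLt
  have e1 : u (Fin.rev i) z - u (Fin.rev j) z = u j z - u i z := by
    have h1 := hanti i; have h2 := hanti j; linarith
  simp only [cConj, higgsMat, Matrix.of_apply, hri, hrj]
  split_ifs with h1 h2 h3 h4 h5 h6 <;>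
    first
      | (exfalso; omega)
      | (rw [Complex.conj_ofReal])
      | (rw [e1, map_div₀, Complex.conj_ofReal])
      | (exact map_zero _)

lemma higgs_mul_cconj (hn : 1 ≤ n) (hanti : ∀ j, u j z + u (Fin.rev j) z = 0)
    (i j : Fin (n + 1)) :
    (higgsMat n u z * cConj n (higgsMat n u z)) i j =
      if i = j then
        (if (i : ℕ) = 0 then (Real.exp (u 0 z - u (Fin.last n) z) : ℂ)
         else (Real.exp (u i z - u (i - 1) z) : ℂ) / (z * (starRingEnd ℂ) z))
      else 0 := by
  have hi := i.isLt
  have hj := j.isLt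
  have hlast : ((Fin.last n : Fin (n + 1)) : ℕ) = n := rfl
  rw [Matrix.mul_apply]
  by_cases hi0 : (i : ℕ) = 0
  · rw [Finset.sum_eq_single (Fin.last n)]
    · have hΦ : higgsMat n u z i (Fin.last n)
          = (Real.exp ((u 0 z - u (Fin.last n) z) / 2) : ℂ) := by
        simp only [higgsMat, Matrix.of_apply]
        rw [if_pos (show (i : ℕ) = 0 ∧ ((Fin.last n : Fin (n + 1)) : ℕ) = n from ⟨hi0, hlast⟩)]
      rw [hΦ, cconj_higgs u z hn hanti]
      by_cases hj0 : (j : ℕ) = 0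
      · rw [if_pos (show ((Fin.last n : Fin (n + 1)) : ℕ) = n ∧ (j : ℕ) = 0 from ⟨hlast, hj0⟩),
          if_pos (show i = j from Fin.ext (by omega)), if_pos hi0,
          ← Complex.ofReal_mul, ← Real.exp_add]
        norm_num
      · rw [if_neg (by tauto), if_neg (by omega), mul_zero,
          if_neg (show ¬ i = j from fun h => hj0 (by rw [← h]; exact hi0))]
    · intro k _ hk
      have hkv : (k : ℕ) ≠ n := fun h => hk (Fin.ext (by omega))
      have hΦ : higgsMat n u z i k = 0 := by
        simp only [higgsMat, Matrix.of_apply]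
        rw [if_neg (by tauto), if_neg (by omega)]
      rw [hΦ, zero_mul]
    · intro h; exact absurd (Finset.mem_univ _) h
  · have hk0lt : (i : ℕ) - 1 < n + 1 := by omega
    have hmk : ((⟨(i : ℕ) - 1, hk0lt⟩ : Fin (n + 1)) : ℕ) = (i : ℕ) - 1 := rfl
    rw [Finset.sum_eq_single (⟨(i : ℕ) - 1, hk0lt⟩ : Fin (n + 1))]
    · have hΦ : higgsMat n u z i ⟨(i : ℕ) - 1, hk0lt⟩
          = (Real.exp ((u i z - u ⟨(i : ℕ) - 1, hk0lt⟩ z) / 2) : ℂ) / z := by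
        simp only [higgsMat, Matrix.of_apply]
        rw [if_neg (by omega), if_pos (by omega)]
      rw [hΦ, cconj_higgs u z hn hanti]
      by_cases hji : j = i
      · subst hji
        rw [if_neg (by omega), if_pos (by omega), if_pos rfl, if_neg hi0]
        have hsub : (j - 1 : Fin (n + 1)) = ⟨(j : ℕ) - 1, hk0lt⟩ := by
          apply Fin.ext
          rw [Fin.coe_sub_one, if_neg (fun h => hi0 (by rw [h]; rfl))]
        rw [hsub, div_mul_div_comm, ← Complex.ofReal_mul, ← Real.exp_add]
        norm_num
      · have hji' : (j : ℕ) ≠ (i : ℕ) := fun h => hji (Fin.ext h)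
        rw [if_neg (by omega), if_neg (by omega), mul_zero, if_neg (fun h => hji h.symm)]
    · intro k _ hk
      have hkv : (k : ℕ) ≠ (i : ℕ) - 1 := fun h => hk (Fin.ext (by omega))
      have hΦ : higgsMat n u z i k = 0 := by
        simp only [higgsMat, Matrix.of_apply]
        rw [if_neg (by tauto), if_neg (by omega)]
      rw [hΦ, zero_mul]
    · intro h; exact absurd (Finset.mem_univ _) h

lemma cconj_mul_higgs (hn : 1 ≤ n) (hanti : ∀ j, u j z + u (Fin.rev j) z = 0)
    (i j : Fin (n + 1)) :
    (cConj n (higgsMat n u z) * higgsMat n u z) i j =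
      if i = j then
        (if (i : ℕ) = n then (Real.exp (u 0 z - u (Fin.last n) z) : ℂ)
         else (Real.exp (u (i + 1) z - u i z) : ℂ) / (z * (starRingEnd ℂ) z))
      else 0 := by
  have hi := i.isLt
  have hj := j.isLt
  have hlast : ((Fin.last n : Fin (n + 1)) : ℕ) = n := rfl
  have h0 : ((0 : Fin (n + 1)) : ℕ) = 0 := rfl
  rw [Matrix.mul_apply]
  by_cases hin : (i : ℕ) = n
  · rw [Finset.sum_eq_single (0 : Fin (n + 1))]
    · rw [cconj_higgs u z hn hanti, if_pos (show (i : ℕ) = n ∧ ((0 : Fin (n + 1)) : ℕ) = 0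
        from ⟨hin, h0⟩)]
      have hΦ : higgsMat n u z 0 j
          = if (j : ℕ) = n then (Real.exp ((u 0 z - u (Fin.last n) z) / 2) : ℂ) else 0 := by
        simp only [higgsMat, Matrix.of_apply]
        by_cases hjn : (j : ℕ) = n
        · rw [if_pos ⟨h0, hjn⟩, if_pos hjn]
        · rw [if_neg (by tauto), if_neg (by omega), if_neg hjn]
      rw [hΦ]
      by_cases hjn : (j : ℕ) = n
      · rw [if_pos hjn, if_pos (show i = j from Fin.ext (by omega)), if_pos hin,
          ← Complex.ofReal_mul, ← Real.exp_add]
        norm_num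
      · rw [if_neg hjn, mul_zero,
          if_neg (show ¬ i = j from fun h => hjn (by rw [← h]; exact hin))]
    · intro k _ hk
      have hkv : (k : ℕ) ≠ 0 := fun h => hk (Fin.ext (by omega))
      have hc : cConj n (higgsMat n u z) i k = 0 := by
        rw [cconj_higgs u z hn hanti, if_neg (by tauto), if_neg (by omega)]
      rw [hc, zero_mul]
    · intro h; exact absurd (Finset.mem_univ _) h
  · have hk0lt : (i : ℕ) + 1 < n + 1 := by omega
    have hmk : ((⟨(i : ℕ) + 1, hk0lt⟩ : Fin (n + 1)) : ℕ) = (i : ℕ) + 1 := rfl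
    rw [Finset.sum_eq_single (⟨(i : ℕ) + 1, hk0lt⟩ : Fin (n + 1))]
    · rw [cconj_higgs u z hn hanti, if_neg (by omega), if_pos (by omega)]
      have hΦ : higgsMat n u z ⟨(i : ℕ) + 1, hk0lt⟩ j
          = if (j : ℕ) = (i : ℕ) then
              (Real.exp ((u ⟨(i : ℕ) + 1, hk0lt⟩ z - u j z) / 2) : ℂ) / z else 0 := by
        simp only [higgsMat, Matrix.of_apply]
        by_cases hji : (j : ℕ) = (i : ℕ)
        · rw [if_neg (by omega), if_pos (by omega), if_pos hji]
        · rw [if_neg (by omega), if_neg (by omega), if_neg hji]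
      rw [hΦ]
      by_cases hji : (j : ℕ) = (i : ℕ)
      · have hjieq : i = j := Fin.ext (by omega)
        rw [if_pos hji, if_pos hjieq, if_neg hin]
        have hadd : (i + 1 : Fin (n + 1)) = ⟨(i : ℕ) + 1, hk0lt⟩ := by
          apply Fin.ext
          rw [Fin.val_add_one, if_neg (fun h => hin (by rw [h]; exact hlast))]
        subst hjieq
        rw [hadd, div_mul_div_comm, ← Complex.ofReal_mul, ← Real.exp_add,
          mul_comm ((starRingEnd ℂ) z) z]
        norm_num
      · rw [if_neg hji, mul_zero, if_neg (fun h => hji (by rw [← h]))]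
    · intro k _ hk
      have hkv : (k : ℕ) ≠ (i : ℕ) + 1 := fun h => hk (Fin.ext (by omega))
      have hc : cConj n (higgsMat n u z) i k = 0 := by
        rw [cconj_higgs u z hn hanti, if_neg (by omega), if_neg (by omega)]
      rw [hc, zero_mul]
    · intro h; exact absurd (Finset.mem_univ _) h

end matrices


section equations
variable {n : ℕ} (u : Fin (n + 1) → ℂ → ℝ) {z : ℂ}

lemma DiffAt.div2 {f : ℂ → ℂ} {z : ℂ} (hf : DifferentiableAt ℝ f z) :
    DifferentiableAt ℝ (fun w => f w / 2) z := by
  simp only [div_eq_mul_inv]; exact hf.mul_const _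

lemma higgs_dzbar (hz : z ≠ 0)
    (hd : ∀ k : Fin (n + 1), DifferentiableAt ℝ (fun w => ((u k w : ℝ) : ℂ)) z)
    (i j : Fin (n + 1)) :
    wirtingerDzbar (fun w => higgsMat n u w i j) z
      = ((wirtingerDzbar (fun w => ((u i w : ℝ) : ℂ)) z
          - wirtingerDzbar (fun w => ((u j w : ℝ) : ℂ)) z) / 2) * higgsMat n u z i j := by
  by_cases hc : (i : ℕ) = 0 ∧ (j : ℕ) = n
  · have hi0 : i = 0 := Fin.ext hc.1
    have hjl : j = Fin.last n := Fin.ext hc.2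
    subst hi0; subst hjl
    have hfe : (fun w => higgsMat n u w 0 (Fin.last n))
        = fun w => Complex.exp ((((u 0 w : ℝ) : ℂ) - ((u (Fin.last n) w : ℝ) : ℂ)) / 2) := by
      funext w
      simp only [higgsMat, Matrix.of_apply]
      rw [if_pos ⟨rfl, rfl⟩, Complex.ofReal_exp]
      push_cast
      ring_nf
    have hent : higgsMat n u z 0 (Fin.last n)
        = Complex.exp ((((u 0 z : ℝ) : ℂ) - ((u (Fin.last n) z : ℝ) : ℂ)) / 2) := congrFun hfe z
    have hgd : DifferentiableAt ℝ
        (fun w => ((((u 0 w : ℝ) : ℂ)) - ((u (Fin.last n) w : ℝ) : ℂ)) / 2) z :=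
      DiffAt.div2 ((hd 0).sub (hd (Fin.last n)))
    rw [hfe, hent, wzbar_cexp hgd, wzbar_div_const ((hd 0).fun_sub (hd (Fin.last n))),
      wzbar_sub (hd 0) (hd (Fin.last n))]
    ring
  · by_cases hc2 : (i : ℕ) = (j : ℕ) + 1
    · have hfe : (fun w => higgsMat n u w i j)
          = fun w => Complex.exp ((((u i w : ℝ) : ℂ) - ((u j w : ℝ) : ℂ)) / 2) * w⁻¹ := by
        funext w
        simp only [higgsMat, Matrix.of_apply]
        rw [if_neg hc, if_pos hc2, Complex.ofReal_exp, div_eq_mul_inv]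
        push_cast
        ring_nf
      have hent : higgsMat n u z i j
          = Complex.exp ((((u i z : ℝ) : ℂ) - ((u j z : ℝ) : ℂ)) / 2) * z⁻¹ := congrFun hfe z
      have hgd : DifferentiableAt ℝ
          (fun w => ((((u i w : ℝ) : ℂ)) - ((u j w : ℝ) : ℂ)) / 2) z :=
        DiffAt.div2 ((hd i).sub (hd j))
      have hinvC : DifferentiableAt ℂ (fun w : ℂ => w⁻¹) z := differentiableAt_inv hz
      have hinv : DifferentiableAt ℝ (fun w : ℂ => w⁻¹) z := hinvC.restrictScalars ℝ
      rw [hfe, hent, wzbar_mul hgd.cexp hinv, wzbar_cexp hgd,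
        wzbar_holo hinvC,
        wzbar_div_const ((hd i).fun_sub (hd j)), wzbar_sub (hd i) (hd j)]
      ring
    · have hfe : (fun w => higgsMat n u w i j) = fun _ => (0 : ℂ) := by
        funext w
        simp only [higgsMat, Matrix.of_apply]
        rw [if_neg hc, if_neg hc2]
      have hent : higgsMat n u z i j = 0 := congrFun hfe z
      rw [hfe, hent, wzbar_const, mul_zero]

lemma eq2_entry (hz : z ≠ 0)
    (hd : ∀ k : Fin (n + 1), DifferentiableAt ℝ (fun w => ((u k w : ℝ) : ℂ)) z)
    (i j : Fin (n + 1)) :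
    wirtingerDzbar (fun w => higgsMat n u w i j) z
      + (AdoubleMat n u z * higgsMat n u z - higgsMat n u z * AdoubleMat n u z) i j = 0 := by
  rw [higgs_dzbar u hz hd i j]
  have e1 : (AdoubleMat n u z * higgsMat n u z) i j
      = (-(1/2) : ℂ) * (wirtingerDzbar (fun w => ((u i w : ℝ) : ℂ)) z * higgsMat n u z i j) := by
    rw [AdoubleMat, Matrix.smul_mul, Matrix.smul_apply, Matrix.diagonal_mul, smul_eq_mul]
  have e2 : (higgsMat n u z * AdoubleMat n u z) i j
      = (-(1/2) : ℂ) * (higgsMat n u z i j * wirtingerDzbar (fun w => ((u j w : ℝ) : ℂ)) z) := by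
    rw [AdoubleMat, Matrix.mul_smul, Matrix.smul_apply, Matrix.mul_diagonal, smul_eq_mul]
  rw [Matrix.sub_apply, e1, e2]
  ring

lemma Aprime_commute :
    AprimeMat n u z * AdoubleMat n u z - AdoubleMat n u z * AprimeMat n u z = 0 := by
  rw [sub_eq_zero]
  ext k l
  simp only [AprimeMat, AdoubleMat, Matrix.smul_mul, Matrix.mul_smul,
    Matrix.diagonal_mul_diagonal, Matrix.smul_apply, smul_eq_mul]
  by_cases h : k = l
  · subst h
    rw [Matrix.diagonal_apply_eq, Matrix.diagonal_apply_eq]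
    ring
  · rw [Matrix.diagonal_apply_ne _ h, Matrix.diagonal_apply_ne _ h]
    ring

lemma eq1_offdiag {i j : Fin (n + 1)} (hij : i ≠ j) :
    wirtingerDz (fun w => AdoubleMat n u w i j) z
      - wirtingerDzbar (fun w => AprimeMat n u w i j) z = 0 := by
  have h2 : (fun w => AdoubleMat n u w i j) = fun _ => (0 : ℂ) := by
    funext w
    simp [AdoubleMat, Matrix.smul_apply, Matrix.diagonal_apply_ne _ hij]
  have h1 : (fun w => AprimeMat n u w i j) = fun _ => (0 : ℂ) := by
    funext w
    simp [AprimeMat, Matrix.smul_apply, Matrix.diagonal_apply_ne _ hij]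
  rw [h1, h2, wz_const, wzbar_const, sub_zero]

lemma eq1_diag_deriv (i : Fin (n + 1))
    (hu2 : ContDiffAt ℝ 2 (fun w => ((u i w : ℝ) : ℂ)) z) :
    wirtingerDz (fun w => AdoubleMat n u w i i) z
      - wirtingerDzbar (fun w => AprimeMat n u w i i) z = - uzzbar (u i) z := by
  have h2 : (fun w => AdoubleMat n u w i i)
      = fun w => (-(1/2) : ℂ) * wirtingerDzbar (fun x => ((u i x : ℝ) : ℂ)) w := by
    funext w
    simp [AdoubleMat, Matrix.smul_apply, Matrix.diagonal_apply_eq, smul_eq_mul]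
  have h1 : (fun w => AprimeMat n u w i i)
      = fun w => ((1/2) : ℂ) * wirtingerDz (fun x => ((u i x : ℝ) : ℂ)) w := by
    funext w
    simp [AprimeMat, Matrix.smul_apply, Matrix.diagonal_apply_eq, smul_eq_mul]
  rw [h1, h2, wz_const_mul (diffAt_wzbar hu2), wzbar_const_mul (diffAt_wz hu2),
    wirtinger_symm hu2]
  simp only [uzzbar]
  ring

end equations

/-- **Proposition 5.4/5.6 of the paper.**  The Hitchin equations for
`(A', A'', Φ)` hold on `ℂ∖{0}` if and only if the `u_j` solve the tt*-Toda
system. -/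
theorem hitchin_iff_ttToda (n : ℕ) (hn : 1 ≤ n)
    (u : Fin (n + 1) → ℂ → ℝ)
    (hu : ∀ j, ContDiffOn ℝ 2 (u j) {(0 : ℂ)}ᶜ)
    (hanti : ∀ j, ∀ z : ℂ, z ≠ 0 → u j z + u (Fin.rev j) z = 0) :
    ((∀ z : ℂ, z ≠ 0 → ∀ i j : Fin (n + 1),
        wirtingerDz (fun w => AdoubleMat n u w i j) z
          - wirtingerDzbar (fun w => AprimeMat n u w i j) z
          + ((AprimeMat n u z * AdoubleMat n u z - AdoubleMat n u z * AprimeMat n u z)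
              + (higgsMat n u z * cConj n (higgsMat n u z)
                  - cConj n (higgsMat n u z) * higgsMat n u z)) i j
          = 0)
      ∧ (∀ z : ℂ, z ≠ 0 → ∀ i j : Fin (n + 1),
        wirtingerDzbar (fun w => higgsMat n u w i j) z
          + (AdoubleMat n u z * higgsMat n u z - higgsMat n u z * AdoubleMat n u z) i j
          = 0))
    ↔ (∀ z : ℂ, z ≠ 0 →
        (uzzbar (u 0) z
            = (Real.exp (u 0 z - u (Fin.last n) z) : ℂ)
              - ((‖z‖ : ℂ) ^ 2)⁻¹ * (Real.exp (u 1 z - u 0 z) : ℂ))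
        ∧ (∀ j : Fin (n + 1), 1 ≤ (j : ℕ) → (j : ℕ) ≤ n - 1 →
            uzzbar (u j) z
              = ((‖z‖ : ℂ) ^ 2)⁻¹ * (Real.exp (u j z - u (j - 1) z) : ℂ)
                - ((‖z‖ : ℂ) ^ 2)⁻¹ * (Real.exp (u (j + 1) z - u j z) : ℂ))
        ∧ (uzzbar (u (Fin.last n)) z
            = ((‖z‖ : ℂ) ^ 2)⁻¹
                * (Real.exp (u (Fin.last n) z - u (Fin.last n - 1) z) : ℂ)
              - (Real.exp (u 0 z - u (Fin.last n) z) : ℂ))) := by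
  have hopen : ∀ z : ℂ, z ≠ 0 → ({(0 : ℂ)}ᶜ : Set ℂ) ∈ nhds z := fun z hz =>
    isOpen_compl_singleton.mem_nhds (by simpa using hz)
  have hv2 : ∀ z : ℂ, z ≠ 0 → ∀ j : Fin (n + 1),
      ContDiffAt ℝ 2 (fun w => ((u j w : ℝ) : ℂ)) z := fun z hz j =>
    Complex.ofRealCLM.contDiff.comp_contDiffAt z ((hu j).contDiffAt (hopen z hz))
  have hvd : ∀ z : ℂ, z ≠ 0 → ∀ j : Fin (n + 1),
      DifferentiableAt ℝ (fun w => ((u j w : ℝ) : ℂ)) z := fun z hz j =>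
    (hv2 z hz j).differentiableAt (by norm_num)
  have habs : ∀ z : ℂ, ((‖z‖ : ℂ)) ^ 2 = z * (starRingEnd ℂ) z := by
    intro z
    rw [Complex.mul_conj]
    norm_cast
    exact Complex.sq_norm z
  have h0v : ((0 : Fin (n + 1)) : ℕ) = 0 := rfl
  have hlv : ((Fin.last n : Fin (n + 1)) : ℕ) = n := rfl
  -- the diagonal reduction of the first Hitchin equation
  have hdiag : ∀ z : ℂ, z ≠ 0 → ∀ i : Fin (n + 1),
      wirtingerDz (fun w => AdoubleMat n u w i i) z
          - wirtingerDzbar (fun w => AprimeMat n u w i i) z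
          + ((AprimeMat n u z * AdoubleMat n u z - AdoubleMat n u z * AprimeMat n u z)
              + (higgsMat n u z * cConj n (higgsMat n u z)
                  - cConj n (higgsMat n u z) * higgsMat n u z)) i i
        = - uzzbar (u i) z
          + ((if (i : ℕ) = 0 then (Real.exp (u 0 z - u (Fin.last n) z) : ℂ)
              else (Real.exp (u i z - u (i - 1) z) : ℂ) / (z * (starRingEnd ℂ) z))
            - (if (i : ℕ) = n then (Real.exp (u 0 z - u (Fin.last n) z) : ℂ)
              else (Real.exp (u (i + 1) z - u i z) : ℂ) / (z * (starRingEnd ℂ) z))) := by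
    intro z hz i
    rw [eq1_diag_deriv u i (hv2 z hz i), Matrix.add_apply, Aprime_commute u,
      Matrix.zero_apply, Matrix.sub_apply,
      higgs_mul_cconj u z hn (fun j => hanti j z hz) i i,
      cconj_mul_higgs u z hn (fun j => hanti j z hz) i i,
      if_pos rfl, if_pos rfl]
    ring
  -- translation between "for all diagonal indices" and the three Toda equations
  have hbridge : ∀ z : ℂ, z ≠ 0 →
      ((∀ i : Fin (n + 1), uzzbar (u i) z
          = ((if (i : ℕ) = 0 then (Real.exp (u 0 z - u (Fin.last n) z) : ℂ)
              else (Real.exp (u i z - u (i - 1) z) : ℂ) / (z * (starRingEnd ℂ) z))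
            - (if (i : ℕ) = n then (Real.exp (u 0 z - u (Fin.last n) z) : ℂ)
              else (Real.exp (u (i + 1) z - u i z) : ℂ) / (z * (starRingEnd ℂ) z)))) ↔
        ((uzzbar (u 0) z
            = (Real.exp (u 0 z - u (Fin.last n) z) : ℂ)
              - ((‖z‖ : ℂ) ^ 2)⁻¹ * (Real.exp (u 1 z - u 0 z) : ℂ))
        ∧ (∀ j : Fin (n + 1), 1 ≤ (j : ℕ) → (j : ℕ) ≤ n - 1 →
            uzzbar (u j) z
              = ((‖z‖ : ℂ) ^ 2)⁻¹ * (Real.exp (u j z - u (j - 1) z) : ℂ)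
                - ((‖z‖ : ℂ) ^ 2)⁻¹ * (Real.exp (u (j + 1) z - u j z) : ℂ))
        ∧ (uzzbar (u (Fin.last n)) z
            = ((‖z‖ : ℂ) ^ 2)⁻¹
                * (Real.exp (u (Fin.last n) z - u (Fin.last n - 1) z) : ℂ)
              - (Real.exp (u 0 z - u (Fin.last n) z) : ℂ)))) := by
    intro z hz
    have hzz : z * (starRingEnd ℂ) z ≠ 0 := by
      rw [← habs z]
      simp [norm_ne_zero_iff.mpr hz, pow_eq_zero_iff]
    constructor
    · intro key
      refine ⟨?_, ?_, ?_⟩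
      · have h := key 0
        rw [if_pos h0v, if_neg (by omega), zero_add] at h
        rw [h, ← habs z, div_eq_inv_mul]
      · intro j hj1 hj2
        have h := key j
        rw [if_neg (by omega), if_neg (by omega), ← habs z, div_eq_inv_mul,
          div_eq_inv_mul] at h
        exact h
      · have h := key (Fin.last n)
        rw [if_neg (by omega), if_pos hlv, ← habs z, div_eq_inv_mul] at h
        exact h
    · intro ⟨ha, hb, hc⟩ i
      have hi := i.isLt
      by_cases hi0 : (i : ℕ) = 0
      · have : i = 0 := Fin.ext hi0
        subst this
        rw [if_pos h0v, if_neg (by omega), zero_add, ha, ← habs z, div_eq_inv_mul]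
      · by_cases hin : (i : ℕ) = n
        · have : i = Fin.last n := Fin.ext hin
          subst this
          rw [if_neg (by omega), if_pos hlv, hc, ← habs z, div_eq_inv_mul]
        · rw [if_neg hi0, if_neg hin, hb i (by omega) (by omega), ← habs z,
            div_eq_inv_mul, div_eq_inv_mul]
  constructor
  · rintro ⟨h1, _⟩ z hz
    rw [← hbridge z hz]
    intro i
    have h := h1 z hz i i
    rw [hdiag z hz i] at h
    linear_combination -h
  · intro hT
    constructor
    · intro z hz i j
      by_cases hij : i = j
      · subst hij
        rw [hdiag z hz i]
        have h := (hbridge z hz).mpr (hT z hz) i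
        rw [h]
        ring
      · rw [Matrix.add_apply, Aprime_commute u, Matrix.zero_apply, Matrix.sub_apply,
          higgs_mul_cconj u z hn (fun k => hanti k z hz) i j,
          cconj_mul_higgs u z hn (fun k => hanti k z hz) i j,
          if_neg hij, if_neg hij, eq1_offdiag u hij]
        ring
    · intro z hz i j
      exact eq2_entry u hz (hvd z hz) i j
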